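/- There exists L₀ = L₀(β, ψ) > 0 such that for all L ≥ L₀, all k ∈ ℕ, and all 0 < ε < L^{−max{k−1, 1/2} − β}, the following holds. Let 1 ≤ l ≤ k, let ω ∈ Ω be any sample, let J₀ be a connected component of B(−(l+β)/2), and let x̂ be the unique point of C'_ψ contained in J₀. Then for every 1 ≤ i ≤ l, f^i_ω(J₀) ⊆ {y ∈ S¹ : d(y, f^i(x̂)) ≤ L^{−β/2}}. -/

import Mathlib

open MeasureTheory Set Filter Topology

noncomputable section

/-! ## Basic circle setup.
We parametrize `S¹ = ℝ/ℤ` by `[0,1)`.  Functions and subsets of `S¹` are represented by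
1-periodic functions/subsets of `ℝ`. -/

/-- The circle distance on `ℝ/ℤ`, computed on representatives. -/
def dS1 (x y : ℝ) : ℝ := |x - y - (round (x - y) : ℝ)|

/-- Circle distance from a point to a set (a subset of `ℝ`, viewed 1-periodically). -/
def dS1Set (x : ℝ) (A : Set ℝ) : ℝ := sInf (dS1 x '' A)

/-- The critical set `C'_ψ = {ψ' = 0}` as a subset of `ℝ`. -/
def Crit (ψ : ℝ → ℝ) : Set ℝ := {x : ℝ | deriv ψ x = 0}

/-- (H1): the critical set is finite (as a subset of `S¹ ≅ [0,1)`). -/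
def H1 (ψ : ℝ → ℝ) : Prop := (Crit ψ ∩ Ico (0:ℝ) 1).Finite

/-- (H2): no degenerate critical points. -/
def H2 (ψ : ℝ → ℝ) : Prop := ∀ x ∈ Crit ψ, deriv (deriv ψ) x ≠ 0

/-- (H4): `‖ψ'‖_{C⁰} ≤ 1/10` and `‖ψ''‖_{C⁰} ≤ 1/10`. -/
def H4 (ψ : ℝ → ℝ) : Prop :=
  (∀ x : ℝ, |deriv ψ x| ≤ 1 / 10) ∧ ∀ x : ℝ, |deriv (deriv ψ) x| ≤ 1 / 10

/-- Standing assumptions on `ψ`: 1-periodicity, `C²` smoothness, (H1), (H2). -/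
def PsiReg (ψ : ℝ → ℝ) : Prop :=
  Function.Periodic ψ 1 ∧ ContDiff ℝ 2 ψ ∧ H1 ψ ∧ H2 ψ

/-- The constant `K₁ = K₁(ψ)` with `|ψ'(x)| ≥ K₁ d(x, C'_ψ)`. -/
def K1hyp (ψ : ℝ → ℝ) (K₁ : ℝ) : Prop :=
  0 < K₁ ∧ ∀ x : ℝ, K₁ * dS1Set x (Crit ψ) ≤ |deriv ψ x|

/-- `‖ψ''‖_{C⁰}`. -/
def psiC2norm (ψ : ℝ → ℝ) : ℝ := ⨆ x : ℝ, |deriv (deriv ψ) x|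

/-- The circle map `f = f_{L,a} = Lψ + a (mod 1)`, on representatives in `[0,1)`. -/
def cmap (ψ : ℝ → ℝ) (L a x : ℝ) : ℝ := Int.fract (L * ψ x + a)

/-- The random orbit `X_{n+1} = f_{ω_n}(X_n) = f(X_n + ω_n)` on `S¹ ≅ [0,1)`;
`orbitW ψ L a ω x n = fⁿ_ω(x)`. -/
def orbitW (ψ : ℝ → ℝ) (L a : ℝ) (ω : ℕ → ℝ) (x : ℝ) : ℕ → ℝ
  | 0 => x
  | n + 1 => cmap ψ L a (orbitW ψ L a ω x n + ω n)

/-- Deterministic iterates `fⁿ(x)`. -/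
def detIter (ψ : ℝ → ℝ) (L a x : ℝ) (n : ℕ) : ℝ := orbitW ψ L a (fun _ => 0) x n

/-- Condition `(H3)_{c,k}`: `d(fˡ(x̂), C'_ψ) ≥ c` for all `x̂ ∈ C'_ψ` and `1 ≤ l ≤ k`. -/
def H3cond (ψ : ℝ → ℝ) (L a c : ℝ) (k : ℕ) : Prop :=
  ∀ x ∈ Crit ψ, ∀ l : ℕ, 1 ≤ l → l ≤ k → c ≤ dS1Set (detIter ψ L a x l) (Crit ψ)

/-- The lifted random orbit `X̃_{n+1} = f̃(X̃_n + ω_n) = Lψ(X̃_n + ω_n) + a` on `ℝ`;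
`liftOrbit ψ L a ω x n = f̃ⁿ_ω(x)`. -/
def liftOrbit (ψ : ℝ → ℝ) (L a : ℝ) (ω : ℕ → ℝ) (x : ℝ) : ℕ → ℝ
  | 0 => x
  | n + 1 => L * ψ (liftOrbit ψ L a ω x n + ω n) + a

/-- `|(fⁿ_ω)'(x)|`, computed by the chain rule (the mod-1 projection has derivative 1). -/
def derivAbs (ψ : ℝ → ℝ) (L a : ℝ) (ω : ℕ → ℝ) (x : ℝ) (n : ℕ) : ℝ :=
  ∏ i ∈ Finset.range n, |L * deriv ψ (orbitW ψ L a ω x i + ω i)|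

/-- `log |(fⁿ_ω)'(x)|`. -/
def logDerivSum (ψ : ℝ → ℝ) (L a : ℝ) (ω : ℕ → ℝ) (x : ℝ) (n : ℕ) : ℝ :=
  ∑ i ∈ Finset.range n, Real.log |L * deriv ψ (orbitW ψ L a ω x i + ω i)|

/-- `log |(f̃ⁿ_ω)'(x)|` along the lifted orbit. -/
def logDerivSumLift (ψ : ℝ → ℝ) (L a : ℝ) (ω : ℕ → ℝ) (x : ℝ) (n : ℕ) : ℝ :=
  ∑ i ∈ Finset.range n, Real.log |L * deriv ψ (liftOrbit ψ L a ω x i + ω i)|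

/-- The (signed) derivative `(f̃ⁿ_ω)'(x)` of the lifted composition. -/
def derivLift (ψ : ℝ → ℝ) (L a : ℝ) (ω : ℕ → ℝ) (x : ℝ) (n : ℕ) : ℝ :=
  ∏ i ∈ Finset.range n, (L * deriv ψ (liftOrbit ψ L a ω x i + ω i))

/-- The uniform distribution `ν^ε` on `[-ε, ε]`. -/
def unif (ε : ℝ) : Measure ℝ :=
  ENNReal.ofReal (1 / (2 * ε)) • volume.restrict (Icc (-ε) ε)

/-- `P = ν^{⊗ ℕ}`: the coordinates of `ω` are i.i.d. with law `ν` under `P`. -/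
def IsProductOf (P : Measure (ℕ → ℝ)) (ν : Measure ℝ) : Prop :=
  IsProbabilityMeasure P ∧
    ∀ (s : Finset ℕ) (A : ℕ → Set ℝ), (∀ i, MeasurableSet (A i)) →
      P {ω : ℕ → ℝ | ∀ i ∈ s, ω i ∈ A i} = ∏ i ∈ s, ν (A i)

/-- A stationary probability measure for the Markov chain `X_{n+1} = f(X_n + ω_n)` on
`S¹ ≅ [0,1)`. -/
def IsStationaryCircle (ψ : ℝ → ℝ) (L a ε : ℝ) (μ : Measure ℝ) : Prop :=
  IsProbabilityMeasure μ ∧ μ (Ico (0:ℝ) 1) = 1 ∧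
    ∀ A : Set ℝ, MeasurableSet A →
      μ A = ∫⁻ x, unif ε {w : ℝ | cmap ψ L a (x + w) ∈ A} ∂μ

/-- `μ` is supported on all of `S¹`. -/
def FullSupport (μ : Measure ℝ) : Prop :=
  ∀ U : Set ℝ, IsOpen U → (U ∩ Ico (0:ℝ) 1).Nonempty → 0 < μ U

/-- The neighborhood `B(η) = {x : d(x, C'_ψ) ≤ K₁⁻¹ L^η}` of the critical set. -/
def Bset (ψ : ℝ → ℝ) (K₁ L η : ℝ) : Set ℝ := {x : ℝ | dS1Set x (Crit ψ) ≤ K₁⁻¹ * L ^ η}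

/-- `G = S¹ ∖ B(-β)`. -/
def Gset (ψ : ℝ → ℝ) (K₁ L β : ℝ) : Set ℝ := (Bset ψ K₁ L (-β))ᶜ

/-- `B^l` for `0 ≤ l ≤ k` (`B⁰ = I`). -/
def BlSet (ψ : ℝ → ℝ) (K₁ L β : ℝ) (k l : ℕ) : Set ℝ :=
  if l = k then Bset ψ K₁ L (-(k : ℝ) / 2 - β)
  else Bset ψ K₁ L (-(l : ℝ) / 2 - β) \ Bset ψ K₁ L (-((l : ℝ) + 1) / 2 - β)

/-- The shifted set `A_w = A - w`. -/
def shiftSet (A : Set ℝ) (w : ℝ) : Set ℝ := {x : ℝ | x + w ∈ A}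
/-! ## The partition `R` into connected components of `G, B⁰, …, B^k`. -/

open scoped Classical in
/-- The element of `{G, B⁰, …, B^k}` containing `x`. -/
def pieceOf (ψ : ℝ → ℝ) (K₁ L β : ℝ) (k : ℕ) (x : ℝ) : Set ℝ :=
  if x ∈ Gset ψ K₁ L β then Gset ψ K₁ L β
  else if h : ∃ l : ℕ, l ≤ k ∧ x ∈ BlSet ψ K₁ L β k l then BlSet ψ K₁ L β k h.choose
  else ∅

/-- The atom of the partition `R` containing `x`: the connected component of the piece of
`{G, B⁰, …, B^k}` containing `x`. -/
def atomR (ψ : ℝ → ℝ) (K₁ L β : ℝ) (k : ℕ) (x : ℝ) : Set ℝ :=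
  connectedComponentIn (pieceOf ψ K₁ L β k x) x

/-- Length of a subset of `ℝ`. -/
def sLen (S : Set ℝ) : ℝ := (volume S).toReal

/-- The atom of the shifted partition `R_w` containing `z`. -/
def atomRshift (ψ : ℝ → ℝ) (K₁ L β : ℝ) (k : ℕ) (w z : ℝ) : Set ℝ :=
  {t : ℝ | t + w ∈ atomR ψ K₁ L β k (z + w)}

/-- `J` is a longest atom of `R_w` restricted to `Jbar`. -/
def IsLongestAtom (ψ : ℝ → ℝ) (K₁ L β : ℝ) (k : ℕ) (w : ℝ) (Jbar J : Set ℝ) : Prop :=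
  (∃ z ∈ Jbar, J = atomRshift ψ K₁ L β k w z ∩ Jbar) ∧
    ∀ z ∈ Jbar, sLen (atomRshift ψ K₁ L β k w z ∩ Jbar) ≤ sLen J

/-- The random interval process `(J_i, J̄_i)` of Section 3.2:
`J₀ = X₀ + [-ε,ε]`, `J̄₁ = f̃(J₀)`, and for `i ≥ 1`, `J_i` is a longest atom of `R_{ω_i}|_{J̄_i}`
and `J̄_{i+1} = f̃_{ω_i}(J_i)`. -/
def IntervalProc (ψ : ℝ → ℝ) (L a K₁ β ε : ℝ) (k : ℕ) (X₀ : ℝ) (ω : ℕ → ℝ)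
    (J Jbar : ℕ → Set ℝ) : Prop :=
  J 0 = Icc (X₀ - ε) (X₀ + ε) ∧
    Jbar 1 = (fun x : ℝ => L * ψ x + a) '' J 0 ∧
    ∀ i : ℕ, 1 ≤ i →
      IsLongestAtom ψ K₁ L β k (ω i) (Jbar i) (J i) ∧
        Jbar (i + 1) = (fun x : ℝ => L * ψ (x + ω i) + a) '' J i

/-! ## The partition `𝒫` of Section 4.1 and the merged partitions `𝒫_ω(I)`. -/

/-- A partition `𝒫` of `S¹` (regarded 1-periodically on `ℝ`) as in Section 4.1(A):
atoms are intervals subordinate to `{G, B⁰, …, B^k}`; on `G` and `B^k` the atoms are the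
connected components, and each component of `B^l` (`l < k`) is divided into intervals of
length in `[(l+1)⁻² L^{-(l+3)/2-β}, 2(l+1)⁻² L^{-(l+3)/2-β}]`. -/
structure GoodPartition (ψ : ℝ → ℝ) (K₁ L β : ℝ) (k : ℕ) (PP : Set (Set ℝ)) : Prop where
  nonempty : ∀ C ∈ PP, C.Nonempty
  interval : ∀ C ∈ PP, C.OrdConnected
  disj : PP.PairwiseDisjoint id
  cover : ⋃₀ PP = univ
  periodic : ∀ C ∈ PP, (fun x : ℝ => x + 1) '' C ∈ PP
  subordinate : ∀ C ∈ PP, C ⊆ Gset ψ K₁ L β ∨ ∃ l ≤ k, C ⊆ BlSet ψ K₁ L β k l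
  g_atoms : ∀ C ∈ PP, C ⊆ Gset ψ K₁ L β → ∀ x ∈ C,
    C = connectedComponentIn (Gset ψ K₁ L β) x
  bk_atoms : ∀ C ∈ PP, C ⊆ BlSet ψ K₁ L β k k → ∀ x ∈ C,
    C = connectedComponentIn (BlSet ψ K₁ L β k k) x
  bl_len : ∀ C ∈ PP, ∀ l : ℕ, l < k → C ⊆ BlSet ψ K₁ L β k l →
    (((l : ℝ) + 1) ^ 2)⁻¹ * L ^ (-((l : ℝ) + 3) / 2 - β) ≤ sLen C ∧
      sLen C ≤ 2 * (((l : ℝ) + 1) ^ 2)⁻¹ * L ^ (-((l : ℝ) + 3) / 2 - β)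

/-- The non-singleton atoms of the shifted partition `𝒫_w` restricted to `I`. -/
def restAtoms (PP : Set (Set ℝ)) (w : ℝ) (I : Set ℝ) : Set (Set ℝ) :=
  {A : Set ℝ | (∃ C ∈ PP, A = ((fun x : ℝ => x - w) '' C) ∩ I) ∧ A.Nontrivial}

/-- `A` lies (weakly) to the left of `B`. -/
def setBefore (A B : Set ℝ) : Prop := ∀ a ∈ A, ∀ b ∈ B, a ≤ b

/-- `A` is one of the two leftmost members of `𝒜`. -/
def TwoLeft (𝒜 : Set (Set ℝ)) (A : Set ℝ) : Prop :=
  A ∈ 𝒜 ∧ {B ∈ 𝒜 | B ≠ A ∧ setBefore B A}.Subsingleton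

/-- `A` is one of the two rightmost members of `𝒜`. -/
def TwoRight (𝒜 : Set (Set ℝ)) (A : Set ℝ) : Prop :=
  A ∈ 𝒜 ∧ {B ∈ 𝒜 | B ≠ A ∧ setBefore A B}.Subsingleton

/-- `𝒜` has at least four members. -/
def AtLeastFour (𝒜 : Set (Set ℝ)) : Prop :=
  ∃ s : Finset (Set ℝ), ↑s ⊆ 𝒜 ∧ s.card = 4

/-- `S` is an atom of the merged partition `𝒫_w(I)` (whose atoms `𝒜 = restAtoms PP w I`
are merged at the two ends, and which is trivial if `N ≤ 3`). -/
def MergedAtom (𝒜 : Set (Set ℝ)) (I S : Set ℝ) : Prop :=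
  (¬ AtLeastFour 𝒜 ∧ S = I) ∨
    (AtLeastFour 𝒜 ∧
      ((∃ A B : Set ℝ, A ∈ 𝒜 ∧ B ∈ 𝒜 ∧ A ≠ B ∧ TwoLeft 𝒜 A ∧ TwoLeft 𝒜 B ∧ S = A ∪ B) ∨
        (∃ A B : Set ℝ, A ∈ 𝒜 ∧ B ∈ 𝒜 ∧ A ≠ B ∧ TwoRight 𝒜 A ∧ TwoRight 𝒜 B ∧ S = A ∪ B) ∨
        (S ∈ 𝒜 ∧ ¬ TwoLeft 𝒜 S ∧ ¬ TwoRight 𝒜 S)))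

/-! ## Itineraries (Section 4.1(B),(C)). -/

/-- The image `f̃ʲ_ω(A)`. -/
def Fim (ψ : ℝ → ℝ) (L a : ℝ) (ω : ℕ → ℝ) (j : ℕ) (A : Set ℝ) : Set ℝ :=
  (fun x : ℝ => liftOrbit ψ L a ω x j) '' A

/-- `C 0 ⊇ C 1 ⊇ ⋯ ⊇ C n` is a chain of itinerary atoms: `C i ∈ 𝒬_i` for `i ≤ n`. -/
def AtomChain (ψ : ℝ → ℝ) (L a : ℝ) (PP : Set (Set ℝ)) (ω : ℕ → ℝ) (I : Set ℝ)
    (n : ℕ) (C : ℕ → Set ℝ) : Prop :=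
  MergedAtom (restAtoms PP (ω 0) I) I (C 0) ∧
    ∀ i : ℕ, i < n →
      ∃ S : Set ℝ,
        MergedAtom (restAtoms PP (ω (i + 1)) (Fim ψ L a ω (i + 1) (C i)))
            (Fim ψ L a ω (i + 1) (C i)) S ∧
          C (i + 1) = C i ∩ (fun x : ℝ => liftOrbit ψ L a ω x (i + 1)) ⁻¹' S

/-- `τ ≥ n` on the chain `C`: no near-visit to `B^k` before time `n`. -/
def ChainTauGE (ψ : ℝ → ℝ) (K₁ L a β : ℝ) (k : ℕ) (ω : ℕ → ℝ) (C : ℕ → Set ℝ)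
    (n : ℕ) : Prop :=
  ∀ i : ℕ, i < n → Fim ψ L a ω i (C i) ∩ shiftSet (BlSet ψ K₁ L β k k) (ω i) = ∅

/-- The chain `C` is bound at time `t`: `t ∈ [t_j + 1, t_j + p_j]` for some bound period. -/
def ChainBoundAt (ψ : ℝ → ℝ) (K₁ L a β : ℝ) (k : ℕ) (ω : ℕ → ℝ) (C : ℕ → Set ℝ)
    (t : ℕ) : Prop :=
  ∃ s : ℕ, s < t ∧ ∃ l : ℕ, 1 ≤ l ∧ l ≤ k ∧
    (Fim ψ L a ω s (C s) ∩ shiftSet (BlSet ψ K₁ L β k l) (ω s)).Nonempty ∧ t ≤ s + l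

/-! ## The supporting interval process `(I_n)` of Section 5.1. -/

open scoped Classical in
/-- The shift used when mapping `I_n` forward: `0` if `I_n` is a fresh noise interval
(`n = 0` or `n - 1` was a near-visit to `B^k`), and `ω_n` otherwise. -/
def stepShift (ψ : ℝ → ℝ) (K₁ L β : ℝ) (k : ℕ) (ω : ℕ → ℝ) (I : ℕ → Set ℝ) : ℕ → ℝ
  | 0 => 0
  | n + 1 =>
    if (I n ∩ shiftSet (BlSet ψ K₁ L β k k) (ω n)).Nonempty then 0 else ω (n + 1)

/-- The supporting interval process `(I_n)` of Section 5.1: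
`I₀ = X̃₀ + [-ε,ε]`; if `I_n` meets `B^k_{ω_n}` then `I_{n+1} = X̃_{n+1} + [-ε,ε]`, and
otherwise `I_{n+1}` is the atom of `𝒫_{ω_{n+1}}(f̃_{(·)}(I_n))` containing `X̃_{n+1}`. -/
def SuppProc (ψ : ℝ → ℝ) (L a K₁ β ε : ℝ) (k : ℕ) (PP : Set (Set ℝ)) (X₀ : ℝ)
    (ω : ℕ → ℝ) (I : ℕ → Set ℝ) : Prop :=
  I 0 = Icc (X₀ - ε) (X₀ + ε) ∧
    ∀ n : ℕ,
      ((I n ∩ shiftSet (BlSet ψ K₁ L β k k) (ω n)).Nonempty →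
          I (n + 1) =
            Icc (liftOrbit ψ L a ω X₀ (n + 1) - ε) (liftOrbit ψ L a ω X₀ (n + 1) + ε)) ∧
      (¬ (I n ∩ shiftSet (BlSet ψ K₁ L β k k) (ω n)).Nonempty →
          MergedAtom
              (restAtoms PP (ω (n + 1))
                ((fun x : ℝ => L * ψ (x + stepShift ψ K₁ L β k ω I n) + a) '' I n))
              ((fun x : ℝ => L * ψ (x + stepShift ψ K₁ L β k ω I n) + a) '' I n)
              (I (n + 1)) ∧
            liftOrbit ψ L a ω X₀ (n + 1) ∈ I (n + 1))

/-- `τ_j = m` for the supporting interval process: `I_m` meets `B^k_{ω_m}`, `m ≥ 1`, and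
exactly `j - 1` earlier positive times do so. -/
def TauEq (ψ : ℝ → ℝ) (K₁ L β : ℝ) (k : ℕ) (ω : ℕ → ℝ) (I : ℕ → Set ℝ)
    (j m : ℕ) : Prop :=
  0 < m ∧ (I m ∩ shiftSet (BlSet ψ K₁ L β k k) (ω m)).Nonempty ∧
    ∃ s : Finset ℕ,
      (∀ i : ℕ, i ∈ s ↔
        (0 < i ∧ i < m ∧ (I i ∩ shiftSet (BlSet ψ K₁ L β k k) (ω i)).Nonempty)) ∧
      s.card = j - 1



lemma dS1_nonneg (x y : ℝ) : 0 ≤ dS1 x y := abs_nonneg _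

lemma dS1_le_int (x y : ℝ) (m : ℤ) : dS1 x y ≤ |x - y - m| := by
  by_contra h
  push_neg at h
  set z := x - y with hz
  have h2 : |z - round z| ≤ 1/2 := abs_sub_round z
  have h3 : |z - (m:ℝ)| < 1/2 := lt_of_lt_of_le h h2
  have h4 : |(round z : ℝ) - m| < 1 := by
    calc |(round z : ℝ) - m| = |(z - m) - (z - round z)| := by ring_nf
      _ ≤ |z - m| + |z - round z| := abs_sub _ _
      _ < 1/2 + 1/2 := by linarith [lt_of_lt_of_le h h2]
      _ = 1 := by norm_num
  have h5 : round z = m := by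
    have h6 : |round z - m| < 1 := by exact_mod_cast (by push_cast; exact h4 : |((round z - m : ℤ) : ℝ)| < 1)
    rw [abs_lt] at h6; omega
  unfold dS1 at h
  rw [← hz, h5] at h
  exact absurd h (lt_irrefl _)

lemma dS1_le_abs (x y : ℝ) : dS1 x y ≤ |x - y| := by simpa using dS1_le_int x y 0

lemma dS1_shift_left (x y : ℝ) (m : ℤ) : dS1 (x + m) y = dS1 x y := by
  unfold dS1
  have : x + (m:ℝ) - y = (x - y) + m := by ring
  rw [this, round_add_intCast]
  push_cast; ring_nf

lemma dS1_shift_right (x y : ℝ) (m : ℤ) : dS1 x (y + m) = dS1 x y := by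
  unfold dS1
  have : x - (y + (m:ℝ)) = (x - y) - m := by ring
  rw [this, round_sub_intCast]
  push_cast; ring_nf

lemma dS1_triangle (x y z : ℝ) : dS1 x z ≤ dS1 x y + dS1 y z := by
  have h := dS1_le_int x z (round (x - y) + round (y - z))
  refine h.trans ?_
  have : |x - z - ((round (x-y) + round (y-z) : ℤ) : ℝ)|
      ≤ |x - y - round (x-y)| + |y - z - round (y-z)| := by
    push_cast
    calc |x - z - ((round (x-y):ℝ) + (round (y-z):ℝ))|
        = |(x - y - round (x-y)) + (y - z - round (y-z))| := by ring_nf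
      _ ≤ _ := abs_add_le _ _
  exact this

lemma dS1_symm_le (x y : ℝ) : dS1 x y ≤ dS1 y x := by
  refine (dS1_le_int x y (-(round (y - x)))).trans_eq ?_
  unfold dS1
  rw [abs_sub_comm]
  push_cast
  ring_nf

lemma dS1_symm (x y : ℝ) : dS1 x y = dS1 y x :=
  le_antisymm (dS1_symm_le x y) (dS1_symm_le y x)

lemma dS1_eq_zero (x y : ℝ) (h : dS1 x y = 0) : ∃ m : ℤ, x - y = m := by
  refine ⟨round (x - y), ?_⟩
  have := abs_eq_zero.mp h
  linarith

-- periodic integer shift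
lemma per_int (f : ℝ → ℝ) (h : Function.Periodic f 1) (x : ℝ) (m : ℤ) : f (x + m) = f x := by
  simpa using (h.int_mul m) x

-- Lipschitz from deriv bound
lemma lip_of_deriv (f : ℝ → ℝ) (hf : Differentiable ℝ f) (C : ℝ) (hC : 0 ≤ C)
    (hb : ∀ x, |deriv f x| ≤ C) (u v : ℝ) : |f u - f v| ≤ C * |u - v| := by
  have := Convex.norm_image_sub_le_of_norm_hasDerivWithin_le
    (f := f) (f' := deriv f) (s := univ)
    (fun x _ => (hf x).hasDerivAt.hasDerivWithinAt)
    (fun x _ => by simpa [Real.norm_eq_abs] using hb x) convex_univ (mem_univ v) (mem_univ u)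
  simpa [Real.norm_eq_abs] using this

-- circle Lipschitz
lemma circle_lip (ψ : ℝ → ℝ) (hper : Function.Periodic ψ 1) (hd : Differentiable ℝ ψ)
    (hb : ∀ x, |deriv ψ x| ≤ 1/10) (u v : ℝ) : |ψ u - ψ v| ≤ (1/10) * dS1 u v := by
  have hv : ψ (v + round (u - v)) = ψ v := per_int ψ hper v _
  calc |ψ u - ψ v| = |ψ u - ψ (v + round (u - v))| := by rw [hv]
    _ ≤ (1/10) * |u - (v + round (u - v))| := lip_of_deriv ψ hd _ (by norm_num) hb _ _
    _ = (1/10) * dS1 u v := by rw [dS1]; ring_nf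

-- quadratic bound near critical point
lemma quad_bound (ψ : ℝ → ℝ) (hψ2 : ContDiff ℝ 2 ψ)
    (hb2 : ∀ x, |deriv (deriv ψ) x| ≤ 1/10) (xh : ℝ) (hcrit : deriv ψ xh = 0)
    (z : ℝ) : |ψ z - ψ xh| ≤ (1/10) * (z - xh)^2 := by
  have hd1 : Differentiable ℝ ψ := hψ2.differentiable (by norm_num)
  have hd2 : Differentiable ℝ (deriv ψ) := by
    have h : ContDiff ℝ ((1:WithTop ℕ∞)+1) ψ := by
      convert hψ2 using 2; exact one_add_one_eq_two
    exact ((contDiff_succ_iff_deriv.mp h).2.2).differentiable one_ne_zero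
  have hder : ∀ t, |deriv ψ t| ≤ (1/10) * |t - xh| := by
    intro t
    have := lip_of_deriv (deriv ψ) hd2 (1/10) (by norm_num) hb2 t xh
    simpa [hcrit] using this
  set D := |z - xh| with hD
  have hmem : z ∈ Icc (xh - D) (xh + D) := by
    constructor <;> [skip; skip] <;> cases' abs_le.mp (le_refl D) with h1 h2 <;> linarith [le_abs_self (z - xh), neg_abs_le (z - xh)]
  have hmemx : xh ∈ Icc (xh - D) (xh + D) := by
    constructor <;> nlinarith [abs_nonneg (z - xh)]
  have key := Convex.norm_image_sub_le_of_norm_hasDerivWithin_le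
    (f := ψ) (f' := deriv ψ) (s := Icc (xh - D) (xh + D))
    (fun x _ => (hd1 x).hasDerivAt.hasDerivWithinAt)
    (fun x hx => by
      have := hder x
      have hxd : |x - xh| ≤ D := by
        rw [abs_le]; constructor <;> [linarith [hx.1]; linarith [hx.2]]
      calc ‖deriv ψ x‖ = |deriv ψ x| := rfl
        _ ≤ (1/10) * |x - xh| := this
        _ ≤ (1/10) * D := by linarith)
    (convex_Icc _ _) hmemx hmem
  have : |ψ z - ψ xh| ≤ (1/10) * D * |z - xh| := by
    simpa [Real.norm_eq_abs] using key
  nlinarith [sq_abs (z - xh), this, abs_nonneg (z - xh)]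

def critGap (ψ : ℝ → ℝ) : ℝ :=
  sInf (insert 1 {d : ℝ | ∃ c ∈ Crit ψ ∩ Ico (0:ℝ) 1, ∃ c' ∈ Crit ψ ∩ Ico (0:ℝ) 1,
    c ≠ c' ∧ d = dS1 c c'})

lemma dS1_pos_of_ne {c c' : ℝ} (hc : c ∈ Ico (0:ℝ) 1) (hc' : c' ∈ Ico (0:ℝ) 1)
    (hne : c ≠ c') : 0 < dS1 c c' := by
  rcases lt_or_eq_of_le (dS1_nonneg c c') with h | h
  · exact h
  · exfalso
    obtain ⟨m, hm⟩ := dS1_eq_zero c c' h.symm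
    have h1 : |c - c'| < 1 := by
      rw [abs_lt]; constructor <;> [linarith [hc.1, hc'.2]; linarith [hc.2, hc'.1]]
    have : m = 0 := by
      have h2 : |(m:ℝ)| < 1 := hm ▸ h1
      have h3 : -1 < (m:ℝ) ∧ (m:ℝ) < 1 := abs_lt.mp h2
      have h4 : (-1:ℤ) < m := by exact_mod_cast h3.1
      have h5 : m < (1:ℤ) := by exact_mod_cast h3.2
      omega
    apply hne; have : c - c' = 0 := by rw [hm, this]; norm_num
    linarith

lemma critGap_pos (ψ : ℝ → ℝ) (hfin : (Crit ψ ∩ Ico (0:ℝ) 1).Finite) : 0 < critGap ψ := by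
  set S := {d : ℝ | ∃ c ∈ Crit ψ ∩ Ico (0:ℝ) 1, ∃ c' ∈ Crit ψ ∩ Ico (0:ℝ) 1,
    c ≠ c' ∧ d = dS1 c c'} with hS
  have hSfin : S.Finite := by
    have : S ⊆ (fun p : ℝ × ℝ => dS1 p.1 p.2) '' ((Crit ψ ∩ Ico (0:ℝ) 1) ×ˢ (Crit ψ ∩ Ico (0:ℝ) 1)) := by
      rintro d ⟨c, hc, c', hc', _, rfl⟩
      exact ⟨(c, c'), ⟨hc, hc'⟩, rfl⟩
    exact ((hfin.prod hfin).image _).subset this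
  have hmem : critGap ψ ∈ insert (1:ℝ) S :=
    Set.Nonempty.csInf_mem ⟨1, mem_insert _ _⟩ (hSfin.insert 1)
  rcases hmem with h | ⟨c, hc, c', hc', hne, hd⟩
  · rw [h]; norm_num
  · rw [hd]; exact dS1_pos_of_ne hc.2 hc'.2 hne
    
lemma critGap_le (ψ : ℝ → ℝ) {c c' : ℝ} (hc : c ∈ Crit ψ ∩ Ico (0:ℝ) 1)
    (hc' : c' ∈ Crit ψ ∩ Ico (0:ℝ) 1) (hne : c ≠ c') : critGap ψ ≤ dS1 c c' := by
  apply csInf_le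
  · refine ⟨0, ?_⟩
    rintro d (rfl | ⟨a, _, b, _, _, rfl⟩)
    · norm_num
    · exact dS1_nonneg a b
  · exact Or.inr ⟨c, hc, c', hc', hne, rfl⟩

lemma round_eq_zero_of (z : ℝ) (h : |z| ≤ 1/4) : round z = 0 := by
  rw [round_eq, Int.floor_eq_zero_iff]
  rw [abs_le] at h
  constructor
  · simp; linarith [h.1]
  · simp; linarith [h.2]

lemma fract_mem_crit (ψ : ℝ → ℝ) (hper : Function.Periodic (deriv ψ) 1) {c : ℝ}
    (hc : c ∈ Crit ψ) : Int.fract c ∈ Crit ψ ∩ Ico (0:ℝ) 1 := by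
  refine ⟨?_, Int.fract_nonneg c, Int.fract_lt_one c⟩
  have : Int.fract c = c + ((-⌊c⌋ : ℤ) : ℝ) := by rw [Int.fract]; push_cast; ring
  show deriv ψ _ = 0
  rw [this, per_int (deriv ψ) hper c (-⌊c⌋)]
  exact hc

lemma dS1_fract_right (x c : ℝ) : dS1 x (Int.fract c) = dS1 x c := by
  have : Int.fract c = c + ((-⌊c⌋ : ℤ) : ℝ) := by rw [Int.fract]; push_cast; ring
  rw [this, dS1_shift_right]

lemma dS1_fract_left (x c : ℝ) : dS1 (Int.fract x) c = dS1 x c := by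
  have : Int.fract x = x + ((-⌊x⌋ : ℤ) : ℝ) := by rw [Int.fract]; push_cast; ring
  rw [this, dS1_shift_left]

lemma sep_lemma (ψ : ℝ → ℝ) (hper : Function.Periodic (deriv ψ) 1) {xh : ℝ}
    (hxh : xh ∈ Crit ψ) {r : ℝ} (hr : 0 < r) (h1 : 2*r ≤ 1/4)
    {t : ℝ} (ht : |t - xh| = 2*r) :
    ∀ c ∈ Crit ψ, min (2*r) (critGap ψ - 2*r) ≤ dS1 t c := by
  intro c hc
  have hxc := fract_mem_crit ψ hper hxh
  have hcc := fract_mem_crit ψ hper hc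
  rcases eq_or_ne (Int.fract c) (Int.fract xh) with he | hne
  · have e1 : dS1 t c = dS1 t xh := by
      rw [← dS1_fract_right t c, he, dS1_fract_right]
    have e2 : dS1 t xh = 2*r := by
      have : round (t - xh) = 0 := round_eq_zero_of _ (by rw [ht]; linarith)
      rw [dS1, this]; simpa using ht
    rw [e1, e2]; exact min_le_left _ _
  · have hG : critGap ψ ≤ dS1 xh c := by
      have := critGap_le ψ hxc hcc (fun h => hne h.symm)
      rwa [dS1_fract_left, dS1_fract_right] at this
    have htri : dS1 xh c ≤ dS1 xh t + dS1 t c := dS1_triangle _ _ _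
    have hxt : dS1 xh t ≤ 2*r := by
      calc dS1 xh t ≤ |xh - t| := dS1_le_abs _ _
        _ = 2*r := by rw [abs_sub_comm]; exact ht
    have : critGap ψ - 2*r ≤ dS1 t c := by linarith
    exact le_trans (min_le_right _ _) this

lemma not_in_Bset (ψ : ℝ → ℝ) (hper : Function.Periodic (deriv ψ) 1) {xh : ℝ}
    (hxh : xh ∈ Crit ψ) {K₁ L η : ℝ} (hK : 0 < K₁)
    (hr1 : 2 * (K₁⁻¹ * L ^ η) ≤ 1/4) (hr2 : 3 * (K₁⁻¹ * L ^ η) < critGap ψ)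
    (hrpos : 0 < K₁⁻¹ * L ^ η)
    {t : ℝ} (ht : |t - xh| = 2*(K₁⁻¹ * L ^ η)) : t ∉ Bset ψ K₁ L η := by
  set r := K₁⁻¹ * L ^ η with hrdef
  intro hmem
  have hsep := sep_lemma ψ hper hxh hrpos hr1 ht
  have hlow : min (2*r) (critGap ψ - 2*r) ≤ dS1Set t (Crit ψ) := by
    apply le_csInf ⟨dS1 t xh, mem_image_of_mem _ hxh⟩
    rintro b ⟨c, hc, rfl⟩
    exact hsep c hc
  have hminr : r < min (2*r) (critGap ψ - 2*r) := by
    apply lt_min <;> linarith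
  exact absurd hmem (by simp only [Bset, mem_setOf_eq, not_le]; exact lt_of_lt_of_le hminr hlow)

lemma comp_subset (ψ : ℝ → ℝ) (hper : Function.Periodic (deriv ψ) 1) {xh : ℝ}
    (hxh : xh ∈ Crit ψ) {K₁ L η : ℝ} (hK : 0 < K₁)
    (hr1 : 2 * (K₁⁻¹ * L ^ η) ≤ 1/4) (hr2 : 3 * (K₁⁻¹ * L ^ η) < critGap ψ)
    (hrpos : 0 < K₁⁻¹ * L ^ η) {J₀ : Set ℝ} (hJ : J₀ = connectedComponentIn (Bset ψ K₁ L η) xh)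
    (hxJ : xh ∈ J₀) : ∀ y ∈ J₀, |y - xh| ≤ 2 * (K₁⁻¹ * L ^ η) := by
  set r := K₁⁻¹ * L ^ η with hrdef
  intro y hy
  have hord : J₀.OrdConnected := by
    rw [hJ]; exact isPreconnected_connectedComponentIn.ordConnected
  have hsub : J₀ ⊆ Bset ψ K₁ L η := hJ ▸ connectedComponentIn_subset _ _
  by_contra h
  push_neg at h
  rcases lt_or_ge y xh with hlt | hge
  · have hyx : y < xh - 2*r := by
      rw [abs_sub_comm, abs_of_pos (by linarith)] at h
      linarith
    have hmem : xh - 2*r ∈ J₀ := hord.out hy hxJ ⟨by linarith, by linarith⟩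
    exact not_in_Bset ψ hper hxh hK hr1 hr2 hrpos
      (t := xh - 2*r) (by rw [abs_of_nonpos (by linarith)]; ring) (hsub hmem)
  · have hyx : xh + 2*r < y := by
      rw [abs_of_nonneg (by linarith)] at h
      linarith
    have hmem : xh + 2*r ∈ J₀ := hord.out hxJ hy ⟨by linarith, by linarith⟩
    exact not_in_Bset ψ hper hxh hK hr1 hr2 hrpos
      (t := xh + 2*r) (by rw [abs_of_nonneg (by linarith)]; ring) (hsub hmem)


lemma periodic_deriv (ψ : ℝ → ℝ) (hper : Function.Periodic ψ 1) :
    Function.Periodic (deriv ψ) 1 := by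
  intro x
  rw [← deriv_comp_add_const ψ 1 x]
  congr 1
  funext z
  exact hper z

lemma cmap_dS1 (ψ : ℝ → ℝ) (L a : ℝ) (hL : 0 ≤ L) (u v : ℝ) :
    dS1 (cmap ψ L a u) (cmap ψ L a v) ≤ L * |ψ u - ψ v| := by
  have hu : cmap ψ L a u = (L * ψ u + a) + ((-⌊L * ψ u + a⌋ : ℤ) : ℝ) := by
    rw [cmap, Int.fract]; push_cast; ring
  have hv : cmap ψ L a v = (L * ψ v + a) + ((-⌊L * ψ v + a⌋ : ℤ) : ℝ) := by
    rw [cmap, Int.fract]; push_cast; ring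
  rw [hu, hv, dS1_shift_left, dS1_shift_right]
  calc dS1 (L * ψ u + a) (L * ψ v + a) ≤ |(L * ψ u + a) - (L * ψ v + a)| := dS1_le_abs _ _
    _ = L * |ψ u - ψ v| := by
        rw [show (L * ψ u + a) - (L * ψ v + a) = L * (ψ u - ψ v) by ring, abs_mul,
          abs_of_nonneg hL]

lemma step_est (ψ : ℝ → ℝ) (hper : Function.Periodic ψ 1) (hd1 : Differentiable ℝ ψ)
    (hb1 : ∀ x, |deriv ψ x| ≤ 1/10) (L a : ℝ) (hL : 0 ≤ L) (u v : ℝ) :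
    dS1 (cmap ψ L a u) (cmap ψ L a v) ≤ (L/10) * dS1 u v := by
  calc dS1 (cmap ψ L a u) (cmap ψ L a v) ≤ L * |ψ u - ψ v| := cmap_dS1 ψ L a hL u v
    _ ≤ L * ((1/10) * dS1 u v) :=
        mul_le_mul_of_nonneg_left (circle_lip ψ hper hd1 hb1 u v) hL
    _ = (L/10) * dS1 u v := by ring

lemma first_est (ψ : ℝ → ℝ) (hper : Function.Periodic ψ 1) (hψ2 : ContDiff ℝ 2 ψ)
    (hb2 : ∀ x, |deriv (deriv ψ) x| ≤ 1/10) (L a : ℝ) (hL : 0 ≤ L) (xh : ℝ)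
    (hcrit : deriv ψ xh = 0) (u : ℝ) :
    dS1 (cmap ψ L a u) (cmap ψ L a xh) ≤ (L/10) * (dS1 u xh)^2 := by
  set m := round (u - xh) with hm
  have hz : ψ (u + ((-m : ℤ) : ℝ)) = ψ u := per_int ψ hper u (-m)
  have habs : (u + ((-m : ℤ) : ℝ)) - xh = u - xh - (m : ℝ) := by push_cast; ring
  calc dS1 (cmap ψ L a u) (cmap ψ L a xh) ≤ L * |ψ u - ψ xh| := cmap_dS1 ψ L a hL u xh
    _ = L * |ψ (u + ((-m : ℤ) : ℝ)) - ψ xh| := by rw [hz]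
    _ ≤ L * ((1/10) * ((u + ((-m : ℤ) : ℝ)) - xh)^2) :=
        mul_le_mul_of_nonneg_left (quad_bound ψ hψ2 hb2 xh hcrit _) hL
    _ = (L/10) * |(u + ((-m : ℤ) : ℝ)) - xh|^2 := by rw [sq_abs]; ring
    _ = (L/10) * (dS1 u xh)^2 := by rw [habs, dS1, ← hm]

set_option maxHeartbeats 1000000 in
/-- **Lemma 2.2** (bound periods).  There is `L₀ = L₀(β,ψ)` such that for all `L ≥ L₀`, all
`k ∈ ℕ` and all `0 < ε < L^{-max{k-1,1/2}-β}`: if `1 ≤ l ≤ k`, `ω` is any sample, `J₀` is a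
connected component of `B(-(l+β)/2)` and `xh` is the unique critical point in `J₀`, then
`f^i_ω(J₀) ⊆ {d(·, f^i(xh)) ≤ L^{-β/2}}` for all `1 ≤ i ≤ l`. -/
theorem lemma_boundPeriod (ψ : ℝ → ℝ) (hψ : PsiReg ψ) (hH4 : H4 ψ)
    (K₁ : ℝ) (hK1 : K1hyp ψ K₁) (β : ℝ) (hβ : β ∈ Ioo (0:ℝ) (1 / 100)) :
    ∃ L₀ : ℝ, 0 < L₀ ∧ ∀ L : ℝ, L₀ ≤ L → ∀ a ∈ Ico (0:ℝ) 1, ∀ k : ℕ, 1 ≤ k →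
      ∀ ε : ℝ, 0 < ε → ε < L ^ (-(max ((k : ℝ) - 1) (1 / 2)) - β) →
        ∀ l : ℕ, 1 ≤ l → l ≤ k →
          ∀ ω : ℕ → ℝ, (∀ i, |ω i| ≤ ε) →
            ∀ J₀ : Set ℝ, ∀ xh : ℝ, xh ∈ J₀ →
              J₀ = connectedComponentIn (Bset ψ K₁ L (-((l : ℝ) + β) / 2)) xh →
              Crit ψ ∩ J₀ = {xh} →
              ∀ i : ℕ, 1 ≤ i → i ≤ l → ∀ y ∈ J₀,
                dS1 (orbitW ψ L a ω y i) (detIter ψ L a xh i) ≤ L ^ (-β / 2) := by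
  obtain ⟨hper, hψ2, hH1, _⟩ := hψ
  obtain ⟨hb1, hb2⟩ := hH4
  obtain ⟨hK1pos, _⟩ := hK1
  obtain ⟨hβ0, hβ1⟩ := hβ
  have hd1 : Differentiable ℝ ψ := hψ2.differentiable (by norm_num)
  have hperd : Function.Periodic (deriv ψ) 1 := periodic_deriv ψ hper
  have hK1inv : (0:ℝ) ≤ K₁⁻¹ := inv_nonneg.mpr hK1pos.le
  set G := critGap ψ with hGdef
  have hG : 0 < G := critGap_pos ψ hH1
  set c₀ : ℝ := min (G/7) (1/8) with hc₀def
  have hc₀ : 0 < c₀ := lt_min (by linarith) (by norm_num)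
  set M : ℝ := 2*K₁⁻¹ + 1 with hMdef
  have hM1 : 1 ≤ M := by rw [hMdef]; linarith
  set c₁ : ℝ := M^2/10 + 1 with hc₁def
  have hc₁1 : 1 ≤ c₁ := by rw [hc₁def]; nlinarith
  refine ⟨max (max 10 ((K₁⁻¹/c₀)^2)) (c₁ ^ ((2:ℝ)/β)), ?_, ?_⟩
  · have h10 : (10:ℝ) ≤ max (max 10 ((K₁⁻¹/c₀)^2)) (c₁ ^ ((2:ℝ)/β)) :=
      le_trans (le_max_left _ _) (le_max_left _ _)
    linarith
  intro L hL a ha k hk ε hε0 hεlt l hl1 hlk ω hω J₀ xh hxJ hJ hCritJ i hi1 hil y hy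
  have hL10 : (10:ℝ) ≤ L := le_trans (le_trans (le_max_left _ _) (le_max_left _ _)) hL
  have hL1 : (1:ℝ) ≤ L := by linarith
  have hL0 : (0:ℝ) < L := by linarith
  have hLq : (K₁⁻¹/c₀)^2 ≤ L := le_trans (le_trans (le_max_right _ _) (le_max_left _ _)) hL
  have hLc : c₁ ^ ((2:ℝ)/β) ≤ L := le_trans (le_max_right _ _) hL
  -- basic consequences of `L` large
  have hq0 : (0:ℝ) ≤ K₁⁻¹/c₀ := div_nonneg hK1inv hc₀.le
  have hhalfpow : (0:ℝ) < L ^ ((1:ℝ)/2) := Real.rpow_pos_of_pos hL0 _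
  have hhalf : K₁⁻¹ ≤ c₀ * L ^ ((1:ℝ)/2) := by
    have h2 : ((K₁⁻¹/c₀)^2 : ℝ) ^ ((1:ℝ)/2) ≤ L ^ ((1:ℝ)/2) :=
      Real.rpow_le_rpow (by positivity) hLq (by norm_num)
    rw [← Real.rpow_natCast (K₁⁻¹/c₀) 2, ← Real.rpow_mul hq0] at h2
    norm_num at h2
    calc K₁⁻¹ = c₀ * (K₁⁻¹/c₀) := by field_simp
      _ ≤ c₀ * L ^ ((1:ℝ)/2) := mul_le_mul_of_nonneg_left h2 hc₀.le
  have hhalf' : K₁⁻¹ * L ^ (-(1:ℝ)/2) ≤ c₀ := by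
    have hneg : L ^ (-(1:ℝ)/2) = (L ^ ((1:ℝ)/2))⁻¹ := by
      rw [show -(1:ℝ)/2 = -((1:ℝ)/2) by ring, Real.rpow_neg hL0.le]
    rw [hneg, ← div_eq_mul_inv, div_le_iff₀ hhalfpow]
    linarith [hhalf]
  have hc₁L : c₁ ≤ L ^ (β/2) := by
    have h2 : (c₁ ^ ((2:ℝ)/β)) ^ (β/2) ≤ L ^ (β/2) :=
      Real.rpow_le_rpow (Real.rpow_nonneg (by linarith) _) hLc (by linarith)
    rwa [← Real.rpow_mul (by linarith : (0:ℝ) ≤ c₁),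
      show (2/β)*(β/2) = 1 by field_simp, Real.rpow_one] at h2
  -- the radius
  set η : ℝ := -((l:ℝ) + β) / 2 with hηdef
  set r : ℝ := K₁⁻¹ * L ^ η with hrdef
  have hJ' : J₀ = connectedComponentIn (Bset ψ K₁ L η) xh := hJ
  have hLη : (0:ℝ) < L ^ η := Real.rpow_pos_of_pos hL0 _
  have hrpos : 0 < r := mul_pos (inv_pos.mpr hK1pos) hLη
  have hl1R : (1:ℝ) ≤ (l:ℝ) := by exact_mod_cast hl1
  have hη12 : η ≤ -(1:ℝ)/2 := by rw [hηdef]; linarith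
  have hrc₀ : r ≤ c₀ := by
    have h1 : L ^ η ≤ L ^ (-(1:ℝ)/2) := Real.rpow_le_rpow_of_exponent_le hL1 hη12
    calc r = K₁⁻¹ * L ^ η := hrdef
      _ ≤ K₁⁻¹ * L ^ (-(1:ℝ)/2) := mul_le_mul_of_nonneg_left h1 hK1inv
      _ ≤ c₀ := hhalf'
  have h2r : 2*r ≤ 1/4 := by
    have := min_le_right (G/7) (1/8); rw [← hc₀def] at this; linarith
  have h3r : 3*r < G := by
    have := min_le_left (G/7) (1/8); rw [← hc₀def] at this; linarith
  have hxhC : xh ∈ Crit ψ := by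
    have h1 : xh ∈ Crit ψ ∩ J₀ := by rw [hCritJ]; exact rfl
    exact h1.1
  have hcomp : ∀ z ∈ J₀, |z - xh| ≤ 2 * (K₁⁻¹ * L ^ η) :=
    comp_subset ψ hperd hxhC hK1pos (by rw [← hrdef]; exact h2r) (by rw [← hrdef]; exact h3r)
      (by rw [← hrdef]; exact hrpos) hJ' hxJ
  -- bounds on ε
  have hlkR : (l:ℝ) ≤ (k:ℝ) := by exact_mod_cast hlk
  have hεle : ε ≤ L ^ (-(max ((k:ℝ)-1) (1/2)) - β) := le_of_lt hεlt
  have hexp1 : -(max ((k:ℝ)-1) (1/2)) - β ≤ η := by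
    rw [hηdef]
    rcases le_or_gt 2 k with hk2 | hk2
    · have hk2R : (2:ℝ) ≤ (k:ℝ) := by exact_mod_cast hk2
      have h1 : (k:ℝ)-1 ≤ max ((k:ℝ)-1) (1/2) := le_max_left _ _
      linarith
    · have hkeq : k = 1 := by omega
      have hleq : l = 1 := by omega
      subst hkeq; subst hleq
      have hm : max ((1:ℝ)-1) ((1:ℝ)/2) = 1/2 := max_eq_right (by norm_num)
      push_cast
      rw [hm]
      linarith
  have hεD : ε ≤ L ^ η := hεle.trans (Real.rpow_le_rpow_of_exponent_le hL1 hexp1)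
  have hεl : ε ≤ L ^ (-((l:ℝ)-1) - β) := by
    refine hεle.trans (Real.rpow_le_rpow_of_exponent_le hL1 ?_)
    have h1 : (l:ℝ)-1 ≤ max ((k:ℝ)-1) (1/2) := le_trans (by linarith) (le_max_left _ _)
    linarith
  -- the orbit estimates
  set D : ℝ := 2*r + ε with hDdef
  have hD0 : (0:ℝ) ≤ D := by rw [hDdef]; linarith
  set Q : ℝ := (L/10) * D^2 with hQdef
  have hQ0 : (0:ℝ) ≤ Q := by rw [hQdef]; positivity
  set S : ℝ := Q + ε with hSdef
  have hS0 : (0:ℝ) ≤ S := by rw [hSdef]; linarith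
  have hεS : ε ≤ S := by rw [hSdef]; linarith
  have hstep : ∀ j : ℕ, dS1 (orbitW ψ L a ω y (j+1)) (detIter ψ L a xh (j+1)) ≤
      (L/10) * (dS1 (orbitW ψ L a ω y j) (detIter ψ L a xh j) + ε) := by
    intro j
    have horb : orbitW ψ L a ω y (j+1) = cmap ψ L a (orbitW ψ L a ω y j + ω j) := rfl
    have hdet : detIter ψ L a xh (j+1) = cmap ψ L a (detIter ψ L a xh j + 0) := rfl
    rw [horb, hdet]
    have h1 : dS1 (orbitW ψ L a ω y j + ω j) (detIter ψ L a xh j + 0) ≤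
        dS1 (orbitW ψ L a ω y j) (detIter ψ L a xh j) + ε := by
      rw [add_zero]
      have t1 := dS1_triangle (orbitW ψ L a ω y j + ω j) (orbitW ψ L a ω y j)
        (detIter ψ L a xh j)
      have t2 : dS1 (orbitW ψ L a ω y j + ω j) (orbitW ψ L a ω y j) ≤ ε := by
        refine le_trans (dS1_le_abs _ _) ?_
        refine le_trans (le_of_eq ?_) (hω j)
        congr 1; ring
      linarith
    calc dS1 (cmap ψ L a (orbitW ψ L a ω y j + ω j)) (cmap ψ L a (detIter ψ L a xh j + 0))
        ≤ (L/10) * dS1 (orbitW ψ L a ω y j + ω j) (detIter ψ L a xh j + 0) :=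
          step_est ψ hper hd1 hb1 L a hL0.le _ _
      _ ≤ (L/10) * (dS1 (orbitW ψ L a ω y j) (detIter ψ L a xh j) + ε) := by
          apply mul_le_mul_of_nonneg_left h1; linarith
  have h1' : dS1 (orbitW ψ L a ω y 1) (detIter ψ L a xh 1) ≤ Q := by
    have horb : orbitW ψ L a ω y 1 = cmap ψ L a (y + ω 0) := rfl
    have hdet : detIter ψ L a xh 1 = cmap ψ L a (xh + 0) := rfl
    rw [horb, hdet, add_zero]
    have hle : dS1 (y + ω 0) xh ≤ D := by
      have t1 := dS1_triangle (y + ω 0) y xh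
      have t2 : dS1 (y + ω 0) y ≤ ε := by
        refine le_trans (dS1_le_abs _ _) ?_
        refine le_trans (le_of_eq ?_) (hω 0)
        congr 1; ring
      have t3 : dS1 y xh ≤ 2*r := by
        refine le_trans (dS1_le_abs _ _) ?_
        rw [hrdef]; exact hcomp y hy
      rw [hDdef]; linarith
    calc dS1 (cmap ψ L a (y + ω 0)) (cmap ψ L a xh) ≤ (L/10) * (dS1 (y + ω 0) xh)^2 :=
          first_est ψ hper hψ2 hb2 L a hL0.le xh hxhC (y + ω 0)
      _ ≤ Q := by
          rw [hQdef]
          have h2 := pow_le_pow_left₀ (dS1_nonneg _ _) hle 2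
          exact mul_le_mul_of_nonneg_left h2 (by linarith)
  have hmain : ∀ j : ℕ, 1 ≤ j →
      dS1 (orbitW ψ L a ω y j) (detIter ψ L a xh j) ≤ (L/5)^(j-1) * S := by
    intro j hj
    induction j, hj using Nat.le_induction with
    | base => simpa using le_trans h1' (by rw [hSdef]; linarith)
    | succ n hn ih =>
      have hL51 : (1:ℝ) ≤ L/5 := by linarith
      have hpow1 : (1:ℝ) ≤ (L/5)^(n-1) := one_le_pow₀ hL51
      have hεpow : ε ≤ (L/5)^(n-1) * S :=
        le_trans hεS (le_mul_of_one_le_left hS0 hpow1)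
      calc dS1 (orbitW ψ L a ω y (n+1)) (detIter ψ L a xh (n+1))
          ≤ (L/10) * (dS1 (orbitW ψ L a ω y n) (detIter ψ L a xh n) + ε) := hstep n
        _ ≤ (L/10) * ((L/5)^(n-1)*S + (L/5)^(n-1)*S) := by
            apply mul_le_mul_of_nonneg_left (by linarith) (by linarith)
        _ = (L/5)^(n-1) * (L/5) * S := by ring
        _ = (L/5)^(n+1-1) * S := by
            rw [show n+1-1 = (n-1)+1 from by omega, pow_succ]
  have hfin := hmain i hi1
  have hpowle : (L/5)^(i-1) ≤ L^(l-1) := by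
    calc (L/5)^(i-1) ≤ L^(i-1) := pow_le_pow_left₀ (by linarith) (by linarith) _
      _ ≤ L^(l-1) := pow_le_pow_right₀ hL1 (by omega)
  have hSfin : dS1 (orbitW ψ L a ω y i) (detIter ψ L a xh i) ≤ L^(l-1) * S :=
    le_trans hfin (mul_le_mul_of_nonneg_right hpowle hS0)
  have hcast : ((l - 1 : ℕ) : ℝ) = (l:ℝ) - 1 := by
    push_cast [Nat.cast_sub hl1]; ring
  have hterm2 : (L:ℝ)^(l-1) * ε ≤ L ^ (-β) := by
    calc L^(l-1) * ε ≤ L^(l-1) * L^(-((l:ℝ)-1) - β) :=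
          mul_le_mul_of_nonneg_left hεl (pow_nonneg hL0.le _)
      _ = L ^ (((l:ℝ)-1) + (-((l:ℝ)-1) - β)) := by
          rw [Real.rpow_add hL0, ← Real.rpow_natCast L (l-1), hcast]
      _ = L ^ (-β) := by ring_nf
  have hDM : D ≤ M * L ^ η := by
    rw [hDdef, hMdef, hrdef]; linarith
  have hterm1 : (L:ℝ)^(l-1) * Q ≤ (M^2/10) * L^(-β) := by
    have hD2 : D^2 ≤ M^2 * L^(η*2) := by
      have h2 := pow_le_pow_left₀ hD0 hDM 2
      calc D^2 ≤ (M * L^η)^2 := h2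
        _ = M^2 * (L^η)^2 := by ring
        _ = M^2 * L^(η*2) := by
            rw [← Real.rpow_natCast (L^η) 2, ← Real.rpow_mul hL0.le]
            norm_num
    calc L^(l-1) * Q = L^(l-1) * (L/10) * D^2 := by rw [hQdef]; ring
      _ ≤ L^(l-1) * (L/10) * (M^2 * L^(η*2)) := by
          apply mul_le_mul_of_nonneg_left hD2 (by positivity)
      _ = (M^2/10) * (L^(l-1) * L * L^(η*2)) := by ring
      _ = (M^2/10) * L^(-β) := by
          congr 1
          rw [← Real.rpow_natCast L (l-1), hcast]
          rw [show L ^ ((l:ℝ)-1) * L * L^(η*2) = L ^ ((l:ℝ)-1) * L^(1:ℝ) * L^(η*2) by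
            rw [Real.rpow_one]]
          rw [← Real.rpow_add hL0, ← Real.rpow_add hL0]
          congr 1
          rw [hηdef]; ring
  calc dS1 (orbitW ψ L a ω y i) (detIter ψ L a xh i) ≤ L^(l-1) * S := hSfin
    _ = L^(l-1) * Q + L^(l-1) * ε := by rw [hSdef]; ring
    _ ≤ (M^2/10) * L^(-β) + L^(-β) := by linarith
    _ = c₁ * L^(-β) := by rw [hc₁def]; ring
    _ ≤ L^(β/2) * L^(-β) :=
        mul_le_mul_of_nonneg_right hc₁L (Real.rpow_nonneg hL0.le _)
    _ = L ^ (-β/2) := by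
        rw [← Real.rpow_add hL0]; congr 1; ring
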